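/- For any r ≥ 1 and a, b, c, d ≥ 0 with ad - bc ≠ 0 and cx^r + d > 0 on (0,∞), the function x ↦ (a x^r + b)/(c x^r + d) is γ^{1/2}-convex on (0,∞); moreover, if r > 1 it is strictly γ^{1/2}-convex. -/

import Mathlib

open Set

private lemma rpow_strictConvexOn_Ioi {p : ℝ} (hp : p < 0 ∨ 1 < p) :
    StrictConvexOn ℝ (Ioi 0) fun x : ℝ => x ^ p := by
  rcases hp with hp | hp
  · apply strictConvexOn_of_deriv2_pos (convex_Ioi 0)
    · intro x hx
      exact (Real.hasDerivAt_rpow_const (Or.inl (ne_of_gt hx))).continuousAt.continuousWithinAt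
    · intro x hx
      rw [interior_Ioi] at hx
      have hx0 : (0:ℝ) < x := hx
      have hev : (deriv fun y : ℝ => y ^ p) =ᶠ[nhds x] fun y => p * y ^ (p - 1) := by
        filter_upwards [eventually_ne_nhds (ne_of_gt hx0)] with y hy
        exact Real.deriv_rpow_const y p
      have h2 : deriv^[2] (fun y : ℝ => y ^ p) x = p * ((p - 1) * x ^ (p - 1 - 1)) := by
        show deriv (deriv fun y : ℝ => y ^ p) x = _
        rw [Filter.EventuallyEq.deriv_eq hev]
        exact ((Real.hasDerivAt_rpow_const (Or.inl (ne_of_gt hx0))).const_mul p).deriv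
      rw [h2, ← mul_assoc]
      have h3 : 0 < p * (p - 1) := mul_pos_of_neg_of_neg hp (by linarith)
      exact mul_pos h3 (Real.rpow_pos_of_pos hx0 (p - 1 - 1))
  · exact (strictConvexOn_rpow hp).subset (Ioi_subset_Ici le_rfl) (convex_Ioi 0)

private lemma rpow_convexOn_Ioi {p : ℝ} (hp : p ≤ 0 ∨ 1 ≤ p) :
    ConvexOn ℝ (Ioi 0) fun x : ℝ => x ^ p := by
  rcases hp with hp | hp
  · rcases eq_or_lt_of_le hp with hp0 | hp0
    · exact (convexOn_const 1 (convex_Ioi 0)).congr fun x hx => by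
        simp [hp0, Real.rpow_zero]
    · exact (rpow_strictConvexOn_Ioi (Or.inl hp0)).convexOn
  · rcases eq_or_lt_of_le hp with hp1 | hp1
    · exact (convexOn_id (convex_Ioi 0)).congr fun x hx => by
        simp [← hp1, Real.rpow_one]
    · exact (rpow_strictConvexOn_Ioi (Or.inr hp1)).convexOn

private lemma convexOn_my_const_mul {s : Set ℝ} {f : ℝ → ℝ} {c : ℝ} (hc : 0 ≤ c)
    (hf : ConvexOn ℝ s f) : ConvexOn ℝ s fun x => c * f x := by
  simpa [smul_eq_mul] using hf.smul hc

private lemma strictConvexOn_my_const_mul {s : Set ℝ} {f : ℝ → ℝ} {c : ℝ} (hc : 0 < c)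
    (hf : StrictConvexOn ℝ s f) : StrictConvexOn ℝ s fun x => c * f x := by
  refine ⟨hf.1, fun x hx y hy hxy a b ha hb hab => ?_⟩
  have h := hf.2 hx hy hxy ha hb hab
  simp only [smul_eq_mul] at h ⊢
  nlinarith [mul_lt_mul_of_pos_left h hc]

/-- For `r ≥ 1` and `a, b, c, d ≥ 0` with `ad - bc ≠ 0` and `c x^r + d > 0` on `(0,∞)`,
the function `x ↦ (a x^r + b)/(c x^r + d)` is γ^{1/2}-convex on `(0,∞)` (nonvanishing
derivative and `1/√|·'|` convex); moreover if `r > 1` it is strictly γ^{1/2}-convex. -/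
theorem hill_gammaHalfConvex (r a b c d : ℝ)
    (hr : 1 ≤ r) (ha : 0 ≤ a) (hb : 0 ≤ b) (hc : 0 ≤ c) (hd : 0 ≤ d)
    (hdet : a * d - b * c ≠ 0)
    (hden : ∀ x ∈ Ioi (0:ℝ), 0 < c * x ^ r + d) :
    ((∀ x ∈ Ioi (0:ℝ),
        derivWithin (fun y => (a * y ^ r + b) / (c * y ^ r + d)) (Ioi 0) x ≠ 0) ∧
      ConvexOn ℝ (Ioi 0) (fun x =>
        1 / Real.sqrt |derivWithin (fun y => (a * y ^ r + b) / (c * y ^ r + d)) (Ioi 0) x|)) ∧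
    (1 < r →
      StrictConvexOn ℝ (Ioi 0) (fun x =>
        1 / Real.sqrt |derivWithin (fun y => (a * y ^ r + b) / (c * y ^ r + d)) (Ioi 0) x|)) := by
  have hr0 : (0:ℝ) < r := lt_of_lt_of_le one_pos hr
  have hDpos : 0 < |a * d - b * c| := abs_pos.mpr hdet
  set D : ℝ := |a * d - b * c| with hDdef
  set K : ℝ := (Real.sqrt (D * r))⁻¹ with hKdef
  have hDr : (0:ℝ) < D * r := mul_pos hDpos hr0
  have hS : (0:ℝ) < Real.sqrt (D * r) := Real.sqrt_pos.mpr hDr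
  have hKpos : 0 < K := inv_pos.mpr hS
  -- derivative formula
  have hderiv : ∀ x ∈ Ioi (0:ℝ),
      derivWithin (fun y => (a * y ^ r + b) / (c * y ^ r + d)) (Ioi 0) x
        = (a * d - b * c) * r * x ^ (r - 1) / (c * x ^ r + d) ^ 2 := by
    intro x hx
    have hx0 : (0:ℝ) < x := hx
    have hN : (0:ℝ) < c * x ^ r + d := hden x hx
    have hpow : HasDerivAt (fun y : ℝ => y ^ r) (r * x ^ (r - 1)) x :=
      Real.hasDerivAt_rpow_const (Or.inl (ne_of_gt hx0))
    have hu : HasDerivAt (fun y : ℝ => a * y ^ r + b) (a * (r * x ^ (r - 1))) x :=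
      (hpow.const_mul a).add_const b
    have hv : HasDerivAt (fun y : ℝ => c * y ^ r + d) (c * (r * x ^ (r - 1))) x :=
      (hpow.const_mul c).add_const d
    have hdiv : HasDerivAt (fun y => (a * y ^ r + b) / (c * y ^ r + d)) _ x := hu.div hv (ne_of_gt hN)
    rw [derivWithin_of_isOpen isOpen_Ioi hx, hdiv.deriv]
    field_simp
    ring
  -- nonvanishing of the derivative
  have hne : ∀ x ∈ Ioi (0:ℝ),
      derivWithin (fun y => (a * y ^ r + b) / (c * y ^ r + d)) (Ioi 0) x ≠ 0 := by
    intro x hx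
    have hx0 : (0:ℝ) < x := hx
    have hN : (0:ℝ) < c * x ^ r + d := hden x hx
    rw [hderiv x hx]
    exact div_ne_zero
      (mul_ne_zero (mul_ne_zero hdet (ne_of_gt hr0))
        (ne_of_gt (Real.rpow_pos_of_pos hx0 (r - 1))))
      (ne_of_gt (pow_pos hN 2))
  -- value formula for 1/sqrt |f'|
  have hval : ∀ x ∈ Ioi (0:ℝ),
      (K * c) * x ^ ((r + 1) / 2) + (K * d) * x ^ ((1 - r) / 2)
        = 1 / Real.sqrt |derivWithin (fun y => (a * y ^ r + b) / (c * y ^ r + d)) (Ioi 0) x| := by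
    intro x hx
    have hx0 : (0:ℝ) < x := hx
    have hN : (0:ℝ) < c * x ^ r + d := hden x hx
    have habs : |derivWithin (fun y => (a * y ^ r + b) / (c * y ^ r + d)) (Ioi 0) x|
        = D * r * x ^ (r - 1) / (c * x ^ r + d) ^ 2 := by
      rw [hderiv x hx, abs_div, abs_of_pos (pow_pos hN 2), abs_mul, abs_mul,
        abs_of_pos hr0, abs_of_pos (Real.rpow_pos_of_pos hx0 (r - 1))]
    rw [habs]
    have hXpos : (0:ℝ) < x ^ ((r - 1) / 2) := Real.rpow_pos_of_pos hx0 _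
    have hsX : Real.sqrt (x ^ (r - 1)) = x ^ ((r - 1) / 2) := by
      rw [Real.sqrt_eq_rpow, ← Real.rpow_mul hx0.le]
      congr 1
      ring
    have hsqrt : Real.sqrt (D * r * x ^ (r - 1) / (c * x ^ r + d) ^ 2)
        = Real.sqrt (D * r) * x ^ ((r - 1) / 2) / (c * x ^ r + d) := by
      rw [Real.sqrt_div (by positivity), Real.sqrt_sq hN.le,
        Real.sqrt_mul (le_of_lt hDr), hsX]
    rw [hsqrt, one_div_div]
    -- relations between the exponents
    have h1 : x ^ ((r - 1) / 2) * x ^ ((1 - r) / 2) = 1 := by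
      rw [← Real.rpow_add hx0]
      have he : (r - 1) / 2 + (1 - r) / 2 = 0 := by ring
      rw [he, Real.rpow_zero]
    have h2 : x ^ ((r + 1) / 2) = x ^ r * x ^ ((1 - r) / 2) := by
      rw [← Real.rpow_add hx0]
      ring_nf
    have hq : x ^ ((1 - r) / 2) = (x ^ ((r - 1) / 2))⁻¹ :=
      eq_inv_of_mul_eq_one_right h1
    rw [h2, hKdef, eq_comm, div_eq_iff (by positivity), hq]
    field_simp
  -- convexity of the model function
  have hp1 : (1:ℝ) ≤ (r + 1) / 2 := by linarith
  have hq0 : (1 - r) / 2 ≤ 0 := by linarith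
  have hcvx : ConvexOn ℝ (Ioi 0) (fun x =>
      1 / Real.sqrt |derivWithin (fun y => (a * y ^ r + b) / (c * y ^ r + d)) (Ioi 0) x|) := by
    refine ConvexOn.congr ?_ hval
    exact (convexOn_my_const_mul (by positivity) (rpow_convexOn_Ioi (Or.inr hp1))).add
      (convexOn_my_const_mul (by positivity) (rpow_convexOn_Ioi (Or.inl hq0)))
  refine ⟨⟨hne, hcvx⟩, fun hr1 => ?_⟩
  -- strict case
  have hp1' : (1:ℝ) < (r + 1) / 2 := by linarith
  have hq0' : (1 - r) / 2 < 0 := by linarith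
  have hcd : 0 < c + d := by
    have := hden 1 (by norm_num)
    rwa [Real.one_rpow, mul_one] at this
  refine StrictConvexOn.congr ?_ hval
  rcases lt_or_ge 0 c with hc0 | hc0
  · exact (strictConvexOn_my_const_mul (by positivity) (rpow_strictConvexOn_Ioi (Or.inr hp1'))).add_convexOn
      (convexOn_my_const_mul (by positivity) (rpow_convexOn_Ioi (Or.inl hq0)))
  · have hd0 : 0 < d := by nlinarith
    exact (convexOn_my_const_mul (by positivity) (rpow_convexOn_Ioi (Or.inr hp1))).add_strictConvexOn
      (strictConvexOn_my_const_mul (by positivity) (rpow_strictConvexOn_Ioi (Or.inl hq0')))
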